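/- Let n ≥ 2 and 2 ≤ k ≤ n, and let V_1, ..., V_k be a partition of the vertex set of K_n into k nonempty parts. Then the number of edges of K_n crossing the partition is at least C(n,2) − C(n−k+1, 2). -/

import Mathlib

attribute [local instance] Classical.propDecidable

lemma key_choose (a b : ℕ) (ha : 1 ≤ a) :
    a.choose 2 + (b + 1).choose 2 ≤ (a + b).choose 2 := by
  induction b with
  | zero => simp
  | succ b ih =>
    have h1 : (b + 1 + 1).choose 2 = (b+1).choose 1 + (b+1).choose 2 :=
      Nat.choose_succ_succ (b+1) 1
    have h2 : (a + b + 1).choose 2 = (a+b).choose 1 + (a+b).choose 2 :=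
      Nat.choose_succ_succ (a+b) 1
    simp [Nat.choose_one_right] at h1 h2
    have : a + (b + 1) = a + b + 1 := by omega
    rw [this, h2]
    omega

lemma sum_choose_two_le {ι : Type*} (s : Finset ι) (f : ι → ℕ) (hs : s.Nonempty)
    (hf : ∀ i ∈ s, 1 ≤ f i) :
    ∑ i ∈ s, (f i).choose 2 ≤ ((∑ i ∈ s, f i) - s.card + 1).choose 2 := by
  induction s using Finset.cons_induction with
  | empty => simp at hs
  | cons a s ha ih =>
    have h1 : 1 ≤ f a := hf a (Finset.mem_cons_self _ _)
    rcases s.eq_empty_or_nonempty with rfl | hs'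
    · simp [Nat.sub_add_cancel h1]
    · rw [Finset.sum_cons, Finset.sum_cons, Finset.card_cons]
      have hf' : ∀ i ∈ s, 1 ≤ f i := fun i hi => hf i (Finset.mem_cons_of_mem hi)
      have hk : s.card ≤ ∑ i ∈ s, f i := by
        calc s.card = ∑ i ∈ s, 1 := by simp
        _ ≤ _ := Finset.sum_le_sum hf'
      have ih' := ih hs' hf'
      have hkey := key_choose (f a) ((∑ i ∈ s, f i) - s.card) h1
      have he2 : f a + ((∑ i ∈ s, f i) - s.card) = f a + ∑ i ∈ s, f i - (s.card + 1) + 1 := by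
        omega
      calc (f a).choose 2 + ∑ i ∈ s, (f i).choose 2
            ≤ (f a).choose 2 + ((∑ i ∈ s, f i) - s.card + 1).choose 2 := by omega
        _ ≤ (f a + ((∑ i ∈ s, f i) - s.card)).choose 2 := hkey
        _ = (f a + ∑ i ∈ s, f i - (s.card + 1) + 1).choose 2 := by rw [he2]

theorem stmt_6 (n : ℕ) (hn : 2 ≤ n) (P : Finset (Finset (Fin n)))
    (hpart : ∀ v : Fin n, ∃! W, W ∈ P ∧ v ∈ W)
    (hne : ∀ W ∈ P, W.Nonempty)
    (hk2 : 2 ≤ P.card) (hkn : P.card ≤ n) :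
    n.choose 2 - (n - P.card + 1).choose 2 ≤
      ((Finset.univ : Finset (Sym2 (Fin n))).filter
        (fun e => ¬ e.IsDiag ∧ ∀ W ∈ P, ¬ (∀ v ∈ e, v ∈ W))).card := by
  classical
  set Cr := ((Finset.univ : Finset (Sym2 (Fin n))).filter
        (fun e => ¬ e.IsDiag ∧ ∀ W ∈ P, ¬ (∀ v ∈ e, v ∈ W))) with hCr
  set Ins := ((Finset.univ : Finset (Sym2 (Fin n))).filter
        (fun e => ¬ e.IsDiag ∧ ∃ W ∈ P, ∀ v ∈ e, v ∈ W)) with hIns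
  set ND := ((Finset.univ : Finset (Sym2 (Fin n))).filter (fun e => ¬ e.IsDiag)) with hND
  have hdisj : Disjoint Cr Ins := by
    rw [Finset.disjoint_left]
    intro e he he'
    rw [hCr, Finset.mem_filter] at he
    rw [hIns, Finset.mem_filter] at he'
    obtain ⟨W, hW, hWe⟩ := he'.2.2
    exact he.2.2 W hW hWe
  have hunion : Cr ∪ Ins = ND := by
    ext e
    simp only [hCr, hIns, hND, Finset.mem_union, Finset.mem_filter, Finset.mem_univ, true_and]
    by_cases hd : e.IsDiag
    · simp [hd]
    · simp only [hd, not_false_iff, true_and, iff_true]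
      by_cases h : ∃ W ∈ P, ∀ v ∈ e, v ∈ W
      · exact Or.inr h
      · exact Or.inl fun W hW hWe => h ⟨W, hW, hWe⟩
  have hNDcard : ND.card = n.choose 2 := by
    rw [hND]
    have := Sym2.card_subtype_not_diag (α := Fin n)
    rw [Fintype.card_subtype] at this
    simpa using this
  -- Inside edges as biUnion
  have hInsB : Ins = P.biUnion (fun W => W.offDiag.image Sym2.mk.uncurry) := by
    ext e
    induction e with
    | _ x y =>
      simp only [hIns, Finset.mem_filter, Finset.mem_univ, true_and, Finset.mem_biUnion,
        Finset.mem_image, Sym2.mk_isDiag_iff, Prod.exists, Finset.mem_offDiag]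
      constructor
      · rintro ⟨hxy, W, hW, hmem⟩
        exact ⟨W, hW, x, y, ⟨hmem x (by simp), hmem y (by simp), hxy⟩, rfl⟩
      · rintro ⟨W, hW, a, b, ⟨haW, hbW, hab⟩, h⟩
        replace h := Sym2.eq_iff.1 h
        rcases h with ⟨rfl, rfl⟩ | ⟨rfl, rfl⟩
        · exact ⟨hab, W, hW, fun v hv => by
            rcases Sym2.mem_iff.1 hv with rfl | rfl <;> assumption⟩
        · exact ⟨Ne.symm hab, W, hW, fun v hv => by
            rcases Sym2.mem_iff.1 hv with rfl | rfl <;> assumption⟩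
  have hpdisj : ∀ W ∈ P, ∀ W' ∈ P, W ≠ W' →
      Disjoint (W.offDiag.image Sym2.mk.uncurry) (W'.offDiag.image Sym2.mk.uncurry) := by
    intro W hW W' hW' hne'
    rw [Finset.disjoint_left]
    rintro e he he'
    obtain ⟨⟨a, b⟩, hab, rfl⟩ := Finset.mem_image.1 he
    obtain ⟨⟨c, d⟩, hcd, hcd'⟩ := Finset.mem_image.1 he'
    rw [Finset.mem_offDiag] at hab hcd
    have haW' : a ∈ W' := by
      replace hcd' := Sym2.eq_iff.1 hcd'
      rcases hcd' with ⟨rfl, rfl⟩ | ⟨rfl, rfl⟩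
      exacts [hcd.1, hcd.2.1]
    obtain ⟨U, hU, hUu⟩ := hpart a
    exact hne' ((hUu W ⟨hW, hab.1⟩).trans (hUu W' ⟨hW', haW'⟩).symm)
  have hInsCard : Ins.card = ∑ W ∈ P, (W.card).choose 2 := by
    rw [hInsB, Finset.card_biUnion hpdisj]
    exact Finset.sum_congr rfl fun W _ => Sym2.card_image_offDiag W
  -- sum of part sizes is n
  have hsum : ∑ W ∈ P, W.card = n := by
    have huniv : P.biUnion id = Finset.univ := by
      ext v
      simp only [Finset.mem_biUnion, id, Finset.mem_univ, iff_true]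
      obtain ⟨W, hW, _⟩ := hpart v
      exact ⟨W, hW.1, hW.2⟩
    have : (P.biUnion id).card = n := by rw [huniv]; simp
    rw [Finset.card_biUnion] at this
    · simpa using this
    · intro W hW W' hW' hne'
      show Disjoint W W'
      rw [Finset.disjoint_left]
      intro a haW haW'
      obtain ⟨U, hU, hUu⟩ := hpart a
      exact hne' ((hUu W ⟨hW, haW⟩).trans (hUu W' ⟨hW', haW'⟩).symm)
  have hPne : P.Nonempty := Finset.card_pos.1 (by omega)
  have hbound : Ins.card ≤ (n - P.card + 1).choose 2 := by
    rw [hInsCard]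
    have := sum_choose_two_le P (fun W => W.card) hPne
      (fun W hW => Finset.card_pos.2 (hne W hW))
    simpa [hsum] using this
  have hcards : Cr.card + Ins.card = n.choose 2 := by
    rw [← hNDcard, ← hunion, Finset.card_union_of_disjoint hdisj]
  omega
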